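/- Let p ≥ 1 be an integer and δ > 0. For z ∈ ℂ with 0 < |z| ≤ δ, write z = r e^{iθ}, set φ = θ/p + π/(2p), and define ρ(z) = r^{1/p} · min_{0 ≤ k ≤ p−1} |sin(φ + kπ/p)| (the distance from the set of complex 2p-th roots parameters to ℝ for P(x,t)=x²+t^{2p}). Then ρ(z) ≥ (2 δ^{1/p})^{1−p} · d(z, iℝ), where d(z, iℝ) = |Re z| = r|cos θ|. In particular the Łojasiewicz exponent in the inequality ρ(z) ≥ c·d(z,Γ)^s can be taken s = 1 for P(x,t) = x² + t^{2p}. -/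

import Mathlib

open Real in
lemma abs_sin_nat_mul_le (n : ℕ) (x : ℝ) : |Real.sin (n * x)| ≤ n * |Real.sin x| := by
  induction n with
  | zero => simp
  | succ n ih =>
    have hx : ((n : ℝ) + 1) * x = n * x + x := by ring
    push_cast
    rw [hx, Real.sin_add]
    have hc := Real.abs_cos_le_one x
    have hc2 := Real.abs_cos_le_one ((n:ℝ)*x)
    have hs := abs_nonneg (Real.sin x)
    have hs2 := abs_nonneg (Real.sin ((n:ℝ)*x))
    calc |Real.sin (n*x) * Real.cos x + Real.cos (n*x) * Real.sin x|
        ≤ |Real.sin (n*x) * Real.cos x| + |Real.cos (n*x) * Real.sin x| := abs_add_le _ _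
      _ ≤ ((n : ℝ) + 1) * |Real.sin x| := by rw [abs_mul, abs_mul]; nlinarith

open Real in
lemma abs_sin_add_nat_pi (y : ℝ) (k : ℕ) : |Real.sin (y + k * π)| = |Real.sin y| := by
  induction k with
  | zero => simp
  | succ k ih =>
    have : y + ((k:ℕ)+1 : ℕ) * π = (y + k * π) + π := by push_cast; ring
    rw [this, Real.sin_add_pi, abs_neg, ih]

open Real in
theorem stmt11 (p : ℕ) (hp : 1 ≤ p) (δ : ℝ) (hδ : 0 < δ)
    (r θ : ℝ) (hr : 0 < r) (hrδ : r ≤ δ)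
    (φ : ℝ) (hφ : φ = θ / p + π / (2 * p))
    (ρ : ℝ)
    (hρ : ρ = r ^ ((1 : ℝ) / p) *
      (Finset.range p).inf' (Finset.nonempty_range_iff.mpr (by omega))
        (fun k => |Real.sin (φ + k * π / p)|)) :
    (2 * δ ^ ((1 : ℝ) / p)) ^ ((1 : ℝ) - p) * (r * |Real.cos θ|) ≤ ρ := by
  have hp0 : (0:ℝ) < p := by exact_mod_cast hp
  -- Step 1: each |sin (φ + kπ/p)| ≥ |cos θ| / p
  have key : ∀ k ∈ Finset.range p, |Real.cos θ| / p ≤ |Real.sin (φ + k * π / p)| := by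
    intro k _
    have hpmul : (p:ℝ) * (φ + k * π / p) = (θ + π/2) + k * π := by
      rw [hφ]; field_simp
    have h1 : |Real.sin ((p:ℝ) * (φ + k * π / p))| = |Real.cos θ| := by
      rw [hpmul, abs_sin_add_nat_pi, Real.sin_add_pi_div_two]
    have h2 := abs_sin_nat_mul_le p (φ + k * π / p)
    rw [h1] at h2
    rw [div_le_iff₀ hp0]
    linarith
  have hinf : |Real.cos θ| / p ≤
      (Finset.range p).inf' (Finset.nonempty_range_iff.mpr (by omega))
        (fun k => |Real.sin (φ + k * π / p)|) :=
    Finset.le_inf' _ _ key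
  -- Step 2: exponents
  have hδp : (0:ℝ) < δ ^ ((1:ℝ)/p) := Real.rpow_pos_of_pos hδ _
  have h1p : (1:ℝ) - p ≤ 0 := by
    have : (1:ℝ) ≤ p := by exact_mod_cast hp
    linarith
  have hsplit : (2 * δ ^ ((1:ℝ)/p)) ^ ((1:ℝ) - p)
      = 2 ^ ((1:ℝ) - p) * (δ ^ ((1:ℝ)/p)) ^ ((1:ℝ) - p) :=
    Real.mul_rpow (by norm_num) hδp.le
  have hδr : (δ ^ ((1:ℝ)/p)) ^ ((1:ℝ) - p) ≤ (r ^ ((1:ℝ)/p)) ^ ((1:ℝ) - p) := by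
    apply Real.rpow_le_rpow_of_nonpos (Real.rpow_pos_of_pos hr _) _ h1p
    exact Real.rpow_le_rpow hr.le hrδ (by positivity)
  have hrcomb : (r ^ ((1:ℝ)/p)) ^ ((1:ℝ) - p) * r = r ^ ((1:ℝ)/p) := by
    have e1 : (r ^ ((1:ℝ)/p)) ^ ((1:ℝ) - p) * r
        = r ^ (((1:ℝ)/p) * ((1:ℝ) - p)) * r ^ (1:ℝ) := by
      rw [← Real.rpow_mul hr.le, Real.rpow_one]
    rw [e1, ← Real.rpow_add hr]
    congr 1
    field_simp
    ring
  have h2p : (2:ℝ) ^ ((1:ℝ) - p) ≤ 1 / p := by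
    have hple : (p:ℝ) ≤ 2 ^ (p - 1) := by
      have h1 := Nat.lt_two_pow_self (n := p - 1)
      have h2 : p ≤ 2 ^ (p-1) := by omega
      exact_mod_cast h2
    have h2rw : (2:ℝ) ^ ((1:ℝ) - p) = ((2:ℝ) ^ (p-1 : ℕ))⁻¹ := by
      rw [← Real.rpow_natCast 2 (p-1), ← Real.rpow_neg (by norm_num)]
      congr 1
      push_cast [Nat.cast_sub hp]
      ring
    rw [h2rw, one_div]
    exact inv_anti₀ hp0 hple
  -- combine
  rw [hρ]
  have habs : (0:ℝ) ≤ |Real.cos θ| := abs_nonneg _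
  have hrp : (0:ℝ) ≤ (r ^ ((1:ℝ)/p)) ^ ((1:ℝ) - p) := Real.rpow_nonneg (by positivity) _
  calc (2 * δ ^ ((1:ℝ)/p)) ^ ((1:ℝ) - p) * (r * |Real.cos θ|)
      = (2 ^ ((1:ℝ) - p) * (δ ^ ((1:ℝ)/p)) ^ ((1:ℝ) - p) * r) * |Real.cos θ| := by
        rw [hsplit]; ring
    _ ≤ ((1/p) * (r ^ ((1:ℝ)/p)) ^ ((1:ℝ) - p) * r) * |Real.cos θ| := by gcongr
    _ = r ^ ((1:ℝ)/p) * (|Real.cos θ| / p) := by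
        rw [mul_assoc ((1:ℝ)/p), hrcomb]; ring
    _ ≤ r ^ ((1:ℝ)/p) * _ := by gcongr
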